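/- arXiv:2510.09859 — 4 statements merged into one kernel-verified Lean document; each statement's English description precedes it below -/
import Mathlib

section
/- Let f*(t) = (1/2)e^{-t/2} be an exponential density on [0,∞), T: [1,2] → ℝ defined by T(r) = 1/(r-1), and U(r' ∣ r) := ∫₀^{T(r')} e^{-rt} f*(t) dt. Then ∂²U/∂r∂r' ≥ 0 for all r, r' ∈ (1,2), i.e., U is supermodular. -/
open Real Set

lemma int_exp_neg (a b : ℝ) (ha : a ≠ 0) :
    ∫ t in (0:ℝ)..b, exp (-a * t) = (1 - exp (-a * b)) / a := by
  have h : ∀ t ∈ uIcc (0:ℝ) b, HasDerivAt (fun t => -exp (-a * t) / a) (exp (-a * t)) t := by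
    intro t _
    have h1 : HasDerivAt (fun t : ℝ => -a * t) (-a) t := by
      simpa using (hasDerivAt_id t).const_mul (-a)
    have h2 := (h1.exp.neg).div_const a
    refine h2.congr_deriv ?_
    field_simp
  rw [intervalIntegral.integral_eq_sub_of_hasDerivAt h
    (Continuous.intervalIntegrable (by continuity) _ _)]
  field_simp
  simp only [mul_zero, neg_zero, exp_zero]
  ring

lemma U_closed (s b : ℝ) (hs : (0:ℝ) < s) :
    ∫ t in (0:ℝ)..b, exp (-s * t) * ((1/2) * exp (-t/2))
      = (1 - exp (-(s + 1/2) * b)) / (2 * s + 1) := by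
  have h1 : ∀ t : ℝ, exp (-s * t) * ((1/2) * exp (-t/2))
      = (1/2) * exp (-(s + 1/2) * t) := by
    intro t
    rw [mul_comm, mul_assoc, ← exp_add]
    congr 1
    ring
  simp_rw [h1]
  rw [intervalIntegral.integral_const_mul, int_exp_neg (s + 1/2) b (by linarith)]
  field_simp

lemma inner_deriv (b r : ℝ) (hr : (1:ℝ) < r) :
    HasDerivAt (fun s => (1 - exp (-(s + 1/2) * b)) / (2 * s + 1))
      ((b * exp (-(r + 1/2) * b) * (2 * r + 1) - (1 - exp (-(r + 1/2) * b)) * 2)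
        / (2 * r + 1) ^ 2) r := by
  have h1 : HasDerivAt (fun s : ℝ => -(s + 1/2) * b) (-b) r := by
    have := ((hasDerivAt_id r).add_const (1/2)).neg.mul_const b
    simpa using this
  have h2 := h1.exp
  have h3 : HasDerivAt (fun s : ℝ => 1 - exp (-(s + 1/2) * b))
      (b * exp (-(r + 1/2) * b)) r := by
    have := h2.const_sub 1
    simpa [mul_comm] using this
  have h4 : HasDerivAt (fun s : ℝ => 2 * s + 1) 2 r := by
    simpa using ((hasDerivAt_id r).const_mul 2).add_const 1
  have h5 := h3.div h4 (by linarith)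
  exact h5

/-- Supermodularity of `U(r' ∣ r) = ∫₀^{T(r')} e^{-rt} f*(t) dt` with
`f*(t) = (1/2)e^{-t/2}` and `T(r') = 1/(r'-1)`: the cross partial `∂²U/∂r∂r'` is
nonnegative for `r, r' ∈ (1,2)`. -/
theorem token_menu_supermodular :
    let f : ℝ → ℝ := fun t => (1/2) * exp (-t/2)
    let T : ℝ → ℝ := fun r' => 1 / (r' - 1)
    let U : ℝ → ℝ → ℝ := fun r' r => ∫ t in (0:ℝ)..(T r'), exp (-r * t) * f t
    ∀ r ∈ Ioo (1:ℝ) 2, ∀ r' ∈ Ioo (1:ℝ) 2,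
      0 ≤ deriv (fun s' => deriv (fun s => U s' s) r) r' := by
  intro f T U r hr r' hr'
  obtain ⟨hr1, hr2⟩ := hr
  obtain ⟨hr'1, hr'2⟩ := hr'
  set D1 : ℝ → ℝ := fun s' =>
    (1/(s'-1) * exp (-(r + 1/2) * (1/(s'-1))) * (2*r+1)
      - (1 - exp (-(r + 1/2) * (1/(s'-1)))) * 2) / (2*r+1)^2 with hD1
  -- Step A: the inner derivative equals D1 everywhere
  have stepA : ∀ s' : ℝ, deriv (fun s => U s' s) r = D1 s' := by
    intro s'
    set b : ℝ := 1/(s'-1) with hb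
    have heq : (fun s => U s' s) =ᶠ[nhds r]
        (fun s => (1 - exp (-(s + 1/2) * b)) / (2 * s + 1)) := by
      filter_upwards [Ioi_mem_nhds (show (0:ℝ) < r by linarith)] with s hs
      exact U_closed s b hs
    rw [heq.deriv_eq, (inner_deriv b r hr1).deriv]
  have hfun : (fun s' => deriv (fun s => U s' s) r) = D1 := funext stepA
  rw [hfun]
  -- Step C: derivative of D1 at r'
  have hne : r' - 1 ≠ 0 := by linarith
  have hbd : HasDerivAt (fun s' : ℝ => 1/(s'-1)) (-(1/(r'-1)^2)) r' := by
    have := ((hasDerivAt_id r').sub_const 1).inv hne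
    simp only [one_div]
    refine this.congr_deriv ?_
    simp only [id]
    field_simp
  have hE : HasDerivAt (fun s' : ℝ => exp (-(r + 1/2) * (1/(s'-1))))
      (-(r + 1/2) * (-(1/(r'-1)^2)) * exp (-(r + 1/2) * (1/(r'-1)))) r' := by
    have := (hbd.const_mul (-(r + 1/2))).exp
    convert this using 1
    ring
  have hN := (((hbd.mul hE).mul_const (2*r+1)).sub ((hE.const_sub 1).mul_const 2)).div_const
    ((2*r+1)^2)
  set E := exp (-(r + 1/2) * (1/(r'-1))) with hE'
  have hV : HasDerivAt D1 (E * (1/(r'-1)) * (r + 1/2) / ((2*r+1) * (r'-1)^2)) r' := by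
    refine hN.congr_deriv ?_
    have h2r : (2*r+1) ≠ 0 := by linarith
    field_simp
    ring
  rw [hV.deriv]
  have hEpos : 0 < E := exp_pos _
  have hr1' : (0:ℝ) < r' - 1 := by linarith
  apply div_nonneg
  · have h1 : 0 < 1/(r'-1) := by positivity
    exact mul_nonneg (mul_nonneg hEpos.le h1.le) (by linarith)
  · have h2 : (0:ℝ) < 2*r+1 := by linarith
    positivity
end

section
/- Let f*(t) = (1/2)e^{-t/2} and T(r) = 1/(r-1) for r ∈ (1,2]. Then the price P(r) = ∫₀^{T(r)} e^{-rt} f*(t) dt - ∫_r² ∫₀^{T(z)} e^{-zt}·t·f*(t) dt dz evaluates in closed form to P(r) = (1/15)·(3 + 2e^{-5/2} - 5e^{-(r+1/2)/(r-1)}). -/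
open Real

/-- First inner integral in closed form. -/
lemma inner1 (z : ℝ) (hz : 1 < z) :
    (∫ t in (0:ℝ)..(1/(z-1)), exp (-z * t) * ((1/2) * exp (-t/2)))
      = (1 - exp (-(z + 1/2)/(z - 1))) / (2*(z + 1/2)) := by
  have hb : (z + 1/2) ≠ 0 := by linarith
  have h1 : (z - 1) ≠ 0 := by linarith
  have key : ∀ t ∈ Set.uIcc (0:ℝ) (1/(z-1)),
      HasDerivAt (fun t => -exp (-(z + 1/2)*t)/(2*(z + 1/2)))
        (exp (-z * t) * ((1/2) * exp (-t/2))) t := by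
    intro t _
    have h2 : HasDerivAt (fun t : ℝ => -(z + 1/2)*t) (-(z + 1/2)) t := by
      simpa using (hasDerivAt_id t).const_mul (-(z + 1/2))
    have h3 := ((h2.exp).div_const (2*(z + 1/2))).neg
    refine (h3.congr_of_eventuallyEq ?_).congr_deriv ?_
    · exact Filter.Eventually.of_forall fun x => by simp only [Pi.neg_apply, Pi.mul_apply]; ring
    · rw [show exp (-z*t) * ((1/2) * exp (-t/2)) = exp (-(z+1/2)*t) * (1/2) by
        rw [show -(z+1/2)*t = -z * t + -t/2 by ring, exp_add]; ring]
      field_simp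
  have hint : IntervalIntegrable (fun t => exp (-z * t) * ((1/2) * exp (-t/2)))
      MeasureTheory.volume 0 (1/(z-1)) := by
    apply Continuous.intervalIntegrable
    fun_prop
  rw [intervalIntegral.integral_eq_sub_of_hasDerivAt key hint]
  rw [show -(z + 1/2)*(1/(z-1)) = -(z + 1/2)/(z - 1) by ring]
  simp [exp_zero]
  field_simp
  ring

/-- Second inner integral in closed form. -/
lemma inner2 (z : ℝ) (hz : 1 < z) :
    (∫ t in (0:ℝ)..(1/(z-1)), exp (-z * t) * t * ((1/2) * exp (-t/2)))
      = (1 - exp (-(z + 1/2)/(z - 1)) * (1 + (z + 1/2)/(z - 1))) / (2*(z + 1/2)^2) := by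
  have hb : (z + 1/2) ≠ 0 := by linarith
  have h1 : (z - 1) ≠ 0 := by linarith
  have key : ∀ t ∈ Set.uIcc (0:ℝ) (1/(z-1)),
      HasDerivAt (fun t => -(exp (-(z + 1/2)*t) * ((z + 1/2)*t + 1))/(2*(z + 1/2)^2))
        (exp (-z * t) * t * ((1/2) * exp (-t/2))) t := by
    intro t _
    have h2 : HasDerivAt (fun t : ℝ => -(z + 1/2)*t) (-(z + 1/2)) t := by
      simpa using (hasDerivAt_id t).const_mul (-(z + 1/2))
    have h4 : HasDerivAt (fun t : ℝ => (z + 1/2)*t + 1) (z + 1/2) t := by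
      simpa using ((hasDerivAt_id t).const_mul (z + 1/2)).add_const 1
    have h3 := (((h2.exp).mul h4).div_const (2*(z + 1/2)^2)).neg
    refine (h3.congr_of_eventuallyEq ?_).congr_deriv ?_
    · exact Filter.Eventually.of_forall fun x => by simp only [Pi.neg_apply, Pi.mul_apply]; ring
    · rw [show exp (-z*t) * t * ((1/2) * exp (-t/2)) = exp (-(z+1/2)*t) * (t/2) by
        rw [show -(z+1/2)*t = -z * t + -t/2 by ring, exp_add]; ring]
      field_simp
      ring
  have hint : IntervalIntegrable (fun t => exp (-z * t) * t * ((1/2) * exp (-t/2)))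
      MeasureTheory.volume 0 (1/(z-1)) := by
    apply Continuous.intervalIntegrable
    fun_prop
  rw [intervalIntegral.integral_eq_sub_of_hasDerivAt key hint]
  rw [show -(z + 1/2)*(1/(z-1)) = -(z + 1/2)/(z - 1) by ring,
      show (z + 1/2)*(1/(z-1)) = (z + 1/2)/(z - 1) by ring]
  simp [exp_zero]
  field_simp
  ring

/-- Antiderivative for the outer integral. -/
noncomputable def G0 (z : ℝ) : ℝ :=
  -((1 - exp (-(z + 1/2)/(z - 1))) / (2*(z + 1/2))) - (1/3) * exp (-(z + 1/2)/(z - 1))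

lemma G0_deriv (z : ℝ) (hz : 1 < z) :
    HasDerivAt G0
      ((1 - exp (-(z + 1/2)/(z - 1)) * (1 + (z + 1/2)/(z - 1))) / (2*(z + 1/2)^2)) z := by
  have hb : (z + 1/2) ≠ 0 := by linarith
  have h1 : (z - 1) ≠ 0 := by linarith
  have hnum : HasDerivAt (fun z : ℝ => -(z + 1/2)) (-1) z := by
    exact ((hasDerivAt_id z).add_const (1/2)).neg.congr_deriv (by ring)
  have hden : HasDerivAt (fun z : ℝ => z - 1) 1 z := (hasDerivAt_id z).sub_const 1
  have hu : HasDerivAt (fun z : ℝ => -(z + 1/2)/(z - 1))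
      (((-1) * (z - 1) - (-(z + 1/2)) * 1) / (z - 1)^2) z := hnum.div hden h1
  have he := hu.exp
  have hden2 : HasDerivAt (fun z : ℝ => 2*(z + 1/2)) 2 z := by
    exact (((hasDerivAt_id z).add_const (1/2)).const_mul 2).congr_deriv (by ring)
  have hterm1 := (((hasDerivAt_const z (1:ℝ)).sub he).div hden2
      (by intro h; apply hb; linarith [h] )).neg
  have hterm2 := he.const_mul (1/3)
  have h := hterm1.sub hterm2
  refine h.congr_deriv ?_
  have h2b : (2*(z + 1/2)) ≠ 0 := by intro h'; exact hb (by linarith)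
  simp only [Pi.sub_apply]
  generalize exp (-(z + 1/2)/(z - 1)) = E
  field_simp
  ring

/-- Closed form of the optimal token price schedule in the leading example:
`P(r) = ∫₀^{T(r)} e^{-rt} f*(t) dt - ∫_r² ∫₀^{T(z)} e^{-zt}·t·f*(t) dt dz`
with `f*(t) = (1/2)e^{-t/2}` and `T(r) = 1/(r-1)` equals
`(1/15)(3 + 2e^{-5/2} - 5e^{-(r+1/2)/(r-1)})`. -/
theorem token_price_closed_form (r : ℝ) (hr : r ∈ Set.Ioc (1:ℝ) 2) :
    (∫ t in (0:ℝ)..(1/(r-1)), exp (-r * t) * ((1/2) * exp (-t/2)))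
      - (∫ z in r..(2:ℝ), ∫ t in (0:ℝ)..(1/(z-1)), exp (-z * t) * t * ((1/2) * exp (-t/2)))
    = (1/15) * (3 + 2 * exp (-5/2) - 5 * exp (-(r + 1/2)/(r - 1))) := by
  obtain ⟨hr1, hr2⟩ := hr
  have huIcc : Set.uIcc r (2:ℝ) = Set.Icc r 2 := Set.uIcc_of_le hr2
  -- replace outer integrand by its closed form
  have hcongr : (∫ z in r..(2:ℝ), ∫ t in (0:ℝ)..(1/(z-1)), exp (-z * t) * t * ((1/2) * exp (-t/2)))
      = ∫ z in r..(2:ℝ), (1 - exp (-(z + 1/2)/(z - 1)) * (1 + (z + 1/2)/(z - 1))) / (2*(z + 1/2)^2) := by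
    apply intervalIntegral.integral_congr
    intro z hz
    rw [huIcc] at hz
    exact inner2 z (lt_of_lt_of_le hr1 hz.1)
  have houter : (∫ z in r..(2:ℝ), (1 - exp (-(z + 1/2)/(z - 1)) * (1 + (z + 1/2)/(z - 1))) / (2*(z + 1/2)^2))
      = G0 2 - G0 r := by
    apply intervalIntegral.integral_eq_sub_of_hasDerivAt
    · intro z hz
      rw [huIcc] at hz
      exact G0_deriv z (lt_of_lt_of_le hr1 hz.1)
    · apply ContinuousOn.intervalIntegrable
      apply ContinuousOn.div
      · apply ContinuousOn.sub continuousOn_const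
        apply ContinuousOn.mul
        · apply Real.continuous_exp.comp_continuousOn
          apply ContinuousOn.div (by fun_prop) (by fun_prop)
          intro x hx
          rw [huIcc] at hx
          have := hx.1; intro h; nlinarith
        · apply ContinuousOn.add continuousOn_const
          apply ContinuousOn.div (by fun_prop) (by fun_prop)
          intro x hx
          rw [huIcc] at hx
          have := hx.1; intro h; nlinarith
      · fun_prop
      · intro x hx
        rw [huIcc] at hx
        have := hx.1
        intro h; nlinarith
  rw [inner1 r hr1, hcongr, houter]
  unfold G0
  have h1 : (r - 1) ≠ 0 := by linarith
  have hb : (r + 1/2) ≠ 0 := by linarith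
  rw [show -((2:ℝ) + 1/2)/(2 - 1) = -5/2 by norm_num]
  generalize exp (-(r + 1/2)/(r - 1)) = E1
  generalize exp (-(5:ℝ)/2) = E2
  field_simp
  ring
end

section
/- Let ζ: [0,∞) → ℝ be continuous with ζ(t) ≥ ζ̲ > 0, let ρ be C², strictly convex, decreasing with ρ'(t) → 0 suitably fast, and define Λ(t) = ∫_t^∞ (e^{∫_s^t χ/ζ(z) dz} · (-ρ'(s))/ζ(s)) ds for a constant χ > 0. Then Λ solves the ODE Λ'(t) = (ρ'(t) + χΛ(t))/ζ(t) with Λ(t) → 0 as t → ∞, and Λ is strictly decreasing (i.e., λ := -Λ' > 0 everywhere). -/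
open Real Set Filter MeasureTheory
open scoped Topology ENNReal

/-- The dual multiplier construction: `Λ(t) = ∫_t^∞ e^{∫_s^t χ/ζ(z) dz}·(-ρ'(s))/ζ(s) ds`
solves the ODE `Λ'(t) = (ρ'(t) + χΛ(t))/ζ(t)`, vanishes at infinity, and is strictly
decreasing (so that `λ = -Λ' > 0`). -/
theorem dual_multiplier_construction
    (χ zlo : ℝ) (hχ : 0 < χ) (hzlo : 0 < zlo)
    (ζ : ℝ → ℝ) (hζc : Continuous ζ) (hζ : ∀ t, zlo ≤ ζ t)
    (ρ : ℝ → ℝ) (hρ : ContDiff ℝ 2 ρ)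
    (hρconv : StrictConvexOn ℝ (Ici 0) ρ) (hρdec : StrictAntiOn ρ (Ici 0))
    (hρ' : IntegrableOn (fun s => -deriv ρ s) (Ioi 0))
    (hint : ∀ t : ℝ, IntegrableOn
      (fun s => exp (∫ z in s..t, χ / ζ z) * (-deriv ρ s) / ζ s) (Ioi t)) :
    let Λ : ℝ → ℝ := fun t => ∫ s in Ioi t, exp (∫ z in s..t, χ / ζ z) * (-deriv ρ s) / ζ s
    (∀ t ≥ (0:ℝ), HasDerivAt Λ ((deriv ρ t + χ * Λ t) / ζ t) t) ∧
    Tendsto Λ atTop (nhds 0) ∧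
    StrictAntiOn Λ (Ici 0) := by
  intro Λ
  have hρd : Differentiable ℝ ρ := hρ.differentiable (by norm_num)
  have hρ'c : Continuous (deriv ρ) := hρ.continuous_deriv (by norm_num)
  have hζpos : ∀ t, 0 < ζ t := fun t => lt_of_lt_of_le hzlo (hζ t)
  have hζne : ∀ t, ζ t ≠ 0 := fun t => (hζpos t).ne'
  have hcc : Continuous (fun z => χ / ζ z) := continuous_const.div hζc hζne
  have hcpos : ∀ z, 0 < χ / ζ z := fun z => div_pos hχ (hζpos z)
  -- deriv ρ strictly mono on Ici 0
  have hmono : StrictMonoOn (deriv ρ) (Ici 0) :=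
    hρconv.strictMonoOn_deriv (fun x _ => hρd x)
  -- deriv ρ negative on Ici 0
  have hderneg : ∀ t ∈ Ici (0:ℝ), deriv ρ t < 0 := by
    intro t ht
    have ht0 : (0:ℝ) ≤ t := ht
    by_contra h
    push_neg at h
    have hpos : ∀ x ∈ interior (Icc (t+1) (t+2)), 0 < deriv ρ x := by
      intro x hx
      rw [interior_Icc] at hx
      have hxt : t < x := by linarith [hx.1]
      have := hmono ht (le_trans ht hxt.le : x ∈ Ici (0:ℝ)) hxt
      linarith
    have hsm : StrictMonoOn ρ (Icc (t+1) (t+2)) :=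
      strictMonoOn_of_deriv_pos (convex_Icc _ _) hρd.continuous.continuousOn hpos
    have h1 : ρ (t+1) < ρ (t+2) :=
      hsm (by constructor <;> linarith) (by constructor <;> linarith) (by linarith)
    have h2 : ρ (t+2) < ρ (t+1) :=
      hρdec (by simp only [mem_Ici]; linarith) (by simp only [mem_Ici]; linarith) (by linarith)
    linarith
  -- the primitive of χ/ζ
  set U : ℝ → ℝ := fun s => ∫ z in (0:ℝ)..s, χ / ζ z with hUdef
  have hUderiv : ∀ s, HasDerivAt U (χ / ζ s) s := by
    intro s
    exact intervalIntegral.integral_hasDerivAt_right (hcc.intervalIntegrable 0 s)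
      (hcc.stronglyMeasurableAtFilter _ _) hcc.continuousAt
  have hUc : Continuous U := by
    rw [continuous_iff_continuousAt]; exact fun s => (hUderiv s).continuousAt
  have hUt : ∀ s t : ℝ, (∫ z in s..t, χ / ζ z) = U t - U s := by
    intro s t
    rw [← intervalIntegral.integral_interval_sub_left (hcc.intervalIntegrable 0 t)
      (hcc.intervalIntegrable 0 s)]
  have hUmono : Monotone U := by
    intro a b hab
    have h : (0:ℝ) ≤ ∫ z in a..b, χ / ζ z :=
      intervalIntegral.integral_nonneg hab (fun z _ => (hcpos z).le)
    rw [hUt a b] at h; linarith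
  -- rescaled integrand
  set g : ℝ → ℝ := fun s => exp (-(U s)) * (-deriv ρ s) / ζ s with hgdef
  have hfg : ∀ t s : ℝ, exp (∫ z in s..t, χ / ζ z) * (-deriv ρ s) / ζ s
      = exp (U t) * g s := by
    intro t s
    rw [hUt, hgdef]
    simp only [mul_div_assoc, ← mul_assoc, ← Real.exp_add]
    ring_nf
  have hgc : Continuous g := by
    apply Continuous.div _ hζc hζne
    exact (Real.continuous_exp.comp hUc.neg).mul hρ'c.neg
  have hgint : ∀ a : ℝ, IntegrableOn g (Ioi a) := by
    intro a
    have h1 : IntegrableOn (fun s => exp (-(U a)) *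
        (exp (∫ z in s..a, χ / ζ z) * (-deriv ρ s) / ζ s)) (Ioi a) :=
      (hint a).const_mul _
    refine h1.congr_fun (fun s _ => ?_) measurableSet_Ioi
    beta_reduce
    rw [hfg a s, ← mul_assoc, ← Real.exp_add]
    simp
  set G : ℝ → ℝ := fun t => ∫ s in Ioi t, g s with hGdef
  have hΛeq : ∀ t, Λ t = exp (U t) * G t := by
    intro t
    rw [hGdef]
    simp only []
    rw [← integral_const_mul]
    exact setIntegral_congr_fun measurableSet_Ioi (fun s _ => hfg t s)
  -- splitting of tail integrals
  have hsplit : ∀ (h : ℝ → ℝ) (a x : ℝ), a ≤ x → IntegrableOn h (Ioi a) →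
      (∫ s in Ioi x, h s) = (∫ s in Ioi a, h s) - ∫ s in a..x, h s := by
    intro h a x hax hi
    rw [intervalIntegral.integral_of_le hax]
    have hu : Ioc a x ∪ Ioi x = Ioi a := Ioc_union_Ioi_eq_Ioi hax
    have := setIntegral_union (Ioc_disjoint_Ioi le_rfl) measurableSet_Ioi
      (hi.mono_set Ioc_subset_Ioi_self) (hi.mono_set (Ioi_subset_Ioi hax))
    rw [hu] at this
    rw [this]; ring
  have hGderiv : ∀ t, HasDerivAt G (-(g t)) t := by
    intro t
    have hF : HasDerivAt (fun x => ∫ s in (t-1)..x, g s) (g t) t :=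
      intervalIntegral.integral_hasDerivAt_right (hgc.intervalIntegrable _ _)
        (hgc.stronglyMeasurableAtFilter _ _) hgc.continuousAt
    have hRHS : HasDerivAt (fun x => (∫ s in Ioi (t-1), g s) - ∫ s in (t-1)..x, g s)
        (-(g t)) t := hF.const_sub _
    refine hRHS.congr_of_eventuallyEq ?_
    filter_upwards [Ioi_mem_nhds (show t - 1 < t by linarith)] with x hx
    exact hsplit g (t-1) x (le_of_lt hx) (hgint (t-1))
  -- the ODE
  have hΛderiv : ∀ t, HasDerivAt Λ ((deriv ρ t + χ * Λ t) / ζ t) t := by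
    intro t
    have h1 : HasDerivAt (fun x => exp (U x) * G x)
        ((exp (U t) * (χ / ζ t)) * G t + exp (U t) * (-(g t))) t :=
      ((hUderiv t).exp).mul (hGderiv t)
    have heq : (fun x => exp (U x) * G x) = Λ := by
      funext x; rw [hΛeq x]
    rw [heq] at h1
    convert h1 using 1
    rw [hΛeq t, hgdef]
    have hee : rexp (U t) * rexp (-U t) = 1 := by rw [← Real.exp_add]; simp
    field_simp
    linear_combination (-(deriv ρ t * (ζ t)⁻¹)) * hee
  refine ⟨fun t _ => hΛderiv t, ?_, ?_⟩
  · -- tendsto 0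
    have hexp_le : ∀ t s : ℝ, t ≤ s → exp (∫ z in s..t, χ / ζ z) ≤ 1 := by
      intro t s hts
      rw [hUt, Real.exp_le_one_iff]
      have := hUmono hts; linarith
    have hnn : ∀ t ≥ (0:ℝ), 0 ≤ Λ t := by
      intro t ht
      apply setIntegral_nonneg measurableSet_Ioi
      intro s hs
      have hs0 : (0:ℝ) ≤ s := le_trans ht (le_of_lt hs)
      have := hderneg s hs0
      have h1 : 0 ≤ -deriv ρ s := by linarith
      exact div_nonneg (mul_nonneg (exp_pos _).le h1) (hζpos s).le
    have hub : ∀ t ≥ (0:ℝ), Λ t ≤ zlo⁻¹ * ∫ s in Ioi t, -deriv ρ s := by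
      intro t ht
      rw [← integral_const_mul]
      apply setIntegral_mono_on (hint t)
        (((hρ'.mono_set (Ioi_subset_Ioi ht))).const_mul _) measurableSet_Ioi
      intro s hs
      have hs0 : (0:ℝ) ≤ s := le_trans ht (le_of_lt hs)
      have h1 : 0 ≤ -deriv ρ s := by linarith [hderneg s hs0]
      have h2 : exp (∫ z in s..t, χ / ζ z) ≤ 1 := hexp_le t s (le_of_lt hs)
      have h3 : zlo ≤ ζ s := hζ s
      calc exp (∫ z in s..t, χ / ζ z) * (-deriv ρ s) / ζ s
          ≤ (-deriv ρ s) / zlo := by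
            apply div_le_div₀ h1 ?_ hzlo h3
            nlinarith [exp_pos (∫ z in s..t, χ / ζ z)]
        _ = zlo⁻¹ * (-deriv ρ s) := by ring
    have htail : Tendsto (fun t => ∫ s in Ioi t, -deriv ρ s) atTop (𝓝 0) := by
      have h1 : Tendsto (fun t : ℝ => ∫ s in (0:ℝ)..t, -deriv ρ s) atTop
          (𝓝 (∫ s in Ioi (0:ℝ), -deriv ρ s)) :=
        intervalIntegral_tendsto_integral_Ioi 0 hρ' tendsto_id
      have h2 : Tendsto (fun t : ℝ => (∫ s in Ioi (0:ℝ), -deriv ρ s)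
          - ∫ s in (0:ℝ)..t, -deriv ρ s) atTop (𝓝 0) := by
        have := (tendsto_const_nhds (x := (∫ s in Ioi (0:ℝ), -deriv ρ s))
          (f := atTop (α := ℝ))).sub h1
        simpa using this
      refine h2.congr' ?_
      filter_upwards [Ici_mem_atTop (0:ℝ)] with t ht
      exact (hsplit (fun s => -deriv ρ s) 0 t ht hρ').symm
    have hub' : Tendsto (fun t => zlo⁻¹ * ∫ s in Ioi t, -deriv ρ s) atTop (𝓝 0) := by
      have := htail.const_mul zlo⁻¹
      simpa using this
    refine tendsto_of_tendsto_of_tendsto_of_le_of_le' tendsto_const_nhds hub' ?_ ?_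
    · filter_upwards [Ici_mem_atTop (0:ℝ)] with t ht using hnn t ht
    · filter_upwards [Ici_mem_atTop (0:ℝ)] with t ht using hub t ht
  · -- strict antitone
    have hkey : ∀ t : ℝ, 0 < t → deriv ρ t + χ * Λ t < 0 := by
      intro t ht
      set w : ℝ → ℝ := fun x => χ / ζ x * exp (U t - U x) with hwdef
      set H : ℝ → ℝ := fun x => -exp (U t - U x) with hHdef
      have hHd : ∀ x, HasDerivAt H (w x) x := by
        intro x
        have h1 : HasDerivAt (fun x => U t - U x) (-(χ / ζ x)) x :=
          (hUderiv x).const_sub _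
        have h2 : HasDerivAt H (-(rexp (U t - U x) * -(χ / ζ x))) x := h1.exp.neg
        convert h2 using 1
        simp only [hwdef]
        ring
      have hwpos : ∀ x, 0 < w x := fun x => mul_pos (hcpos x) (exp_pos _)
      have hHmono : Monotone H := by
        intro a b hab
        have := hUmono hab
        simp only [hHdef, neg_le_neg_iff, Real.exp_le_exp]
        linarith
      have hbdd : BddAbove (range H) := by
        refine ⟨0, ?_⟩
        rintro y ⟨x, rfl⟩
        simp [hHdef, (exp_pos _).le]
      have hHtend : Tendsto H atTop (𝓝 (⨆ x, H x)) := tendsto_atTop_ciSup hHmono hbdd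
      have hlle : (⨆ x, H x) ≤ 0 := ciSup_le fun x => by
        simp [hHdef, (exp_pos _).le]
      have hHcont : ContinuousWithinAt H (Ici t) t := (hHd t).continuousAt.continuousWithinAt
      have hwint : IntegrableOn w (Ioi t) :=
        integrableOn_Ioi_deriv_of_nonneg hHcont (fun x _ => hHd x)
          (fun x _ => (hwpos x).le) hHtend
      have hwval : (∫ x in Ioi t, w x) = (⨆ x, H x) - H t :=
        integral_Ioi_of_hasDerivAt_of_tendsto hHcont (fun x _ => hHd x) hwint hHtend
      have hHt : H t = -1 := by simp [hHdef]
      have hwle : (∫ x in Ioi t, w x) ≤ 1 := by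
        rw [hwval, hHt]; linarith
      -- χ Λ t = ∫ w * (-ρ')
      have hΛw : χ * Λ t = ∫ s in Ioi t, w s * (-deriv ρ s) := by
        rw [← integral_const_mul]
        refine setIntegral_congr_fun measurableSet_Ioi (fun s _ => ?_)
        rw [hUt, hwdef]
        field_simp
      have hint1 : IntegrableOn (fun s => w s * (-deriv ρ s)) (Ioi t) := by
        have h1 : IntegrableOn (fun s => χ *
            (exp (∫ z in s..t, χ / ζ z) * (-deriv ρ s) / ζ s)) (Ioi t) :=
          (hint t).const_mul _
        refine h1.congr_fun (fun s _ => ?_) measurableSet_Ioi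
        beta_reduce
        rw [hUt, hwdef]
        field_simp
      have hint2 : IntegrableOn (fun s => w s * (-deriv ρ t)) (Ioi t) :=
        hwint.mul_const _
      have hsub : 0 < ∫ s in Ioi t, (w s * (-deriv ρ t) - w s * (-deriv ρ s)) := by
        rw [integral_pos_iff_support_of_nonneg_ae]
        · have hss : Ioi t ⊆ Function.support
              (fun s => w s * (-deriv ρ t) - w s * (-deriv ρ s)) := by
            intro s hs
            have hts : t < s := hs
            have hd : deriv ρ t < deriv ρ s := hmono ht.le (le_trans ht.le hts.le) hts
            simp only [Function.mem_support]
            have hw := hwpos s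
            exact ne_of_gt (by nlinarith)
          calc (0:ℝ≥0∞) < volume (Ioi t) := by simp [Real.volume_Ioi]
            _ = (volume.restrict (Ioi t)) (Ioi t) := by
                rw [Measure.restrict_apply_self]
            _ ≤ (volume.restrict (Ioi t)) (Function.support _) := measure_mono hss
        · rw [EventuallyLE, ae_restrict_iff' measurableSet_Ioi]
          refine ae_of_all _ (fun s hs => ?_)
          have hts : t < s := hs
          have hd : deriv ρ t < deriv ρ s := hmono ht.le (le_trans ht.le hts.le) hts
          have := hwpos s
          simp only [Pi.zero_apply]
          nlinarith
        · exact hint2.sub hint1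
      rw [integral_sub hint2 hint1] at hsub
      have hη : (∫ s in Ioi t, w s * (-deriv ρ t)) = (∫ s in Ioi t, w s) * (-deriv ρ t) :=
        integral_mul_const _ _
      have hρt : 0 < -deriv ρ t := by linarith [hderneg t ht.le]
      have h1 : (∫ s in Ioi t, w s) * (-deriv ρ t) ≤ 1 * (-deriv ρ t) :=
        mul_le_mul_of_nonneg_right hwle hρt.le
      have h2 : χ * Λ t < -deriv ρ t := by
        rw [hΛw]
        calc (∫ s in Ioi t, w s * (-deriv ρ s))
            < ∫ s in Ioi t, w s * (-deriv ρ t) := by linarith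
          _ ≤ -deriv ρ t := by rw [hη]; linarith
      linarith
    apply strictAntiOn_of_deriv_neg (convex_Ici 0)
    · exact fun x _ => (hΛderiv x).differentiableAt.continuousAt.continuousWithinAt
    · intro x hx
      rw [interior_Ici] at hx
      rw [(hΛderiv x).deriv]
      exact div_neg_of_neg_of_pos (hkey x hx) (hζpos x)
end

section
/- For the KL-divergence case H(μ) = Σ_θ μ(θ) log μ(θ) on the interior of the simplex Δ(Θ), the Bregman divergence is D(e_θ ∣ μ) = -log μ(θ), and it satisfies: (i) min_θ D(e_θ ∣ μ) ≤ log n for all μ ∈ Δ(Θ) with |Θ| = n; (ii) if μ(θ) ≤ 1/n · min_{θ'≠θ} μ(θ') then D(e_θ ∣ μ) > min_{θ'≠θ} D(e_{θ'} ∣ μ) whenever μ(θ) < max_{θ'} μ(θ'); (iii) for θ ≠ θ', the directional derivative (e_θ - μ)·∇_μ D(e_{θ'} ∣ μ) = -(𝟙{θ=θ'} - μ(θ'))/μ(θ') ≤ 0 when θ ≠ θ'. -/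
open Real Finset

private lemma kl_hess {n : ℕ} (hn : 0 < n) (μ : Fin n → ℝ) (hpos : ∀ i, 0 < μ i)
    (hsum : ∑ i, μ i = 1) (u v : Fin n → ℝ) :
    iteratedFDeriv ℝ 2 (fun x : Fin n → ℝ => ∑ i, x i * log (x i / ∑ j, x j)) μ ![u, v]
      = ∑ i, (μ i)⁻¹ * u i * v i - (∑ i, u i) * (∑ i, v i) := by
  haveI : Nonempty (Fin n) := Fin.pos_iff_nonempty.mp hn
  set S : (Fin n → ℝ) →L[ℝ] ℝ := ∑ i, ContinuousLinearMap.proj i with hSdef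
  have hS_apply : ∀ x : Fin n → ℝ, S x = ∑ i, x i := by
    intro x; simp [hSdef, ContinuousLinearMap.sum_apply]
  set F : (Fin n → ℝ) → ℝ :=
    fun x => (∑ i, x i * log (x i)) - S x * log (S x) with hFdef
  set G : (Fin n → ℝ) → ((Fin n → ℝ) →L[ℝ] ℝ) := fun y =>
    (∑ i, (log (y i) + 1) • (ContinuousLinearMap.proj i : (Fin n → ℝ) →L[ℝ] ℝ))
      - (log (S y) + 1) • S with hGdef
  set B : (Fin n → ℝ) →L[ℝ] ((Fin n → ℝ) →L[ℝ] ℝ) :=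
    (∑ i, (((μ i)⁻¹ • (ContinuousLinearMap.proj i : (Fin n → ℝ) →L[ℝ] ℝ)).smulRight
      (ContinuousLinearMap.proj i))) - S.smulRight S with hBdef
  -- the open set of positive vectors
  set s : Set (Fin n → ℝ) := ⋂ i, {x | 0 < x i} with hsdef
  have hs_open : IsOpen s := by
    apply isOpen_iInter_of_finite
    intro i
    exact isOpen_lt continuous_const (continuous_apply i)
  have hμs : μ ∈ s := by simp [hsdef]; intro i; exact hpos i
  have hs_mem : ∀ ⦃y⦄, y ∈ s → ∀ i, 0 < y i := by
    intro y hy i; simp [hsdef] at hy; exact hy i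
  have hSpos : ∀ ⦃y⦄, y ∈ s → 0 < S y := by
    intro y hy
    rw [hS_apply]
    exact Finset.sum_pos (fun i _ => hs_mem hy i) Finset.univ_nonempty
  -- Step A : derivative of F on s
  have stepA : ∀ y ∈ s, HasFDerivAt F (G y) y := by
    intro y hy
    have hy0 : ∀ i, y i ≠ 0 := fun i => (hs_mem hy i).ne'
    have hterm1 : HasFDerivAt (fun x : Fin n → ℝ => ∑ i, x i * log (x i))
        (∑ i, (log (y i) + 1) • (ContinuousLinearMap.proj i : (Fin n → ℝ) →L[ℝ] ℝ)) y := by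
      apply HasFDerivAt.fun_sum
      intro i _
      have hproj : HasFDerivAt (fun x : Fin n → ℝ => x i)
          (ContinuousLinearMap.proj i : (Fin n → ℝ) →L[ℝ] ℝ) y :=
        hasFDerivAt_apply i y
      have hlogc : HasFDerivAt (fun x : Fin n → ℝ => log (x i))
          ((y i)⁻¹ • (ContinuousLinearMap.proj i : (Fin n → ℝ) →L[ℝ] ℝ)) y :=
        (Real.hasDerivAt_log (hy0 i)).comp_hasFDerivAt (h₂ := log) y hproj
      have := hproj.fun_mul hlogc
      refine this.congr_fderiv ?_
      ext w
      simp [ContinuousLinearMap.smul_apply, ContinuousLinearMap.proj_apply, smul_eq_mul]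
      rw [← mul_assoc, mul_inv_cancel₀ (hy0 i), one_mul]
      ring
    have hterm2 : HasFDerivAt (fun x : Fin n → ℝ => S x * log (S x))
        ((log (S y) + 1) • S) y := by
      have hproj : HasFDerivAt (fun x : Fin n → ℝ => S x) S y := S.hasFDerivAt
      have hlogc : HasFDerivAt (fun x : Fin n → ℝ => log (S x)) ((S y)⁻¹ • S) y :=
        (Real.hasDerivAt_log (hSpos hy).ne').comp_hasFDerivAt (h₂ := log) y hproj
      have := hproj.fun_mul hlogc
      refine this.congr_fderiv ?_
      ext w
      simp [ContinuousLinearMap.smul_apply, smul_eq_mul]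
      rw [← mul_assoc, mul_inv_cancel₀ (hSpos hy).ne', one_mul]
      ring
    exact hterm1.sub hterm2
  -- Step C : fderiv F eventually equals G
  have stepC : fderiv ℝ F =ᶠ[nhds μ] G := by
    filter_upwards [hs_open.mem_nhds hμs] with y hy
    exact (stepA y hy).fderiv
  -- Step D : derivative of G at μ
  have stepD : HasFDerivAt G B μ := by
    have hterm1 : HasFDerivAt (fun y : Fin n → ℝ =>
        ∑ i, (log (y i) + 1) • (ContinuousLinearMap.proj i : (Fin n → ℝ) →L[ℝ] ℝ))
        (∑ i, (((μ i)⁻¹ • (ContinuousLinearMap.proj i : (Fin n → ℝ) →L[ℝ] ℝ)).smulRight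
          (ContinuousLinearMap.proj i))) μ := by
      apply HasFDerivAt.fun_sum
      intro i _
      have hproj : HasFDerivAt (fun x : Fin n → ℝ => x i)
          (ContinuousLinearMap.proj i : (Fin n → ℝ) →L[ℝ] ℝ) μ :=
        hasFDerivAt_apply i μ
      have hlogc : HasFDerivAt (fun x : Fin n → ℝ => log (x i) + 1)
          ((μ i)⁻¹ • (ContinuousLinearMap.proj i : (Fin n → ℝ) →L[ℝ] ℝ)) μ :=
        ((Real.hasDerivAt_log (hpos i).ne').comp_hasFDerivAt (h₂ := log) μ hproj).add_const 1
      exact hlogc.smul_const (ContinuousLinearMap.proj i : (Fin n → ℝ) →L[ℝ] ℝ)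
    have hterm2 : HasFDerivAt (fun y : Fin n → ℝ => (log (S y) + 1) • S)
        (S.smulRight S) μ := by
      have hlogc : HasFDerivAt (fun x : Fin n → ℝ => log (S x) + 1)
          ((S μ)⁻¹ • S) μ :=
        ((Real.hasDerivAt_log (by rw [hS_apply, hsum]; norm_num)).comp_hasFDerivAt (h₂ := log) μ
          S.hasFDerivAt).add_const 1
      have := hlogc.smul_const S
      refine this.congr_fderiv ?_
      rw [hS_apply, hsum, inv_one, one_smul]
    exact hterm1.sub hterm2
  -- Step E : second derivative of F
  have stepE : HasFDerivAt (fderiv ℝ F) B μ := stepD.congr_of_eventuallyEq stepC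
  -- Step B' : Hext eventually equals F
  have stepB : (fun x : Fin n → ℝ => ∑ i, x i * log (x i / ∑ j, x j)) =ᶠ[nhds μ] F := by
    filter_upwards [hs_open.mem_nhds hμs] with y hy
    have h0 : ∀ i, y i ≠ 0 := fun i => (hs_mem hy i).ne'
    have hS0 : (∑ j, y j) ≠ 0 := by rw [← hS_apply]; exact (hSpos hy).ne'
    simp only [hFdef, hS_apply]
    have key : ∀ i : Fin n, y i * log (y i / ∑ j, y j)
        = y i * log (y i) - y i * log (∑ j, y j) := by
      intro i
      rw [Real.log_div (h0 i) hS0]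
      ring
    rw [Finset.sum_congr rfl (fun i _ => key i), Finset.sum_sub_distrib, ← Finset.sum_mul]
  -- conclude
  have heq : iteratedFDeriv ℝ 2 (fun x : Fin n → ℝ => ∑ i, x i * log (x i / ∑ j, x j)) μ
      = iteratedFDeriv ℝ 2 F μ := by
    rw [← iteratedFDerivWithin_univ, ← iteratedFDerivWithin_univ]
    apply Filter.EventuallyEq.iteratedFDerivWithin_eq
    · rw [nhdsWithin_univ]; exact stepB
    · exact stepB.eq_of_nhds
  rw [heq, iteratedFDeriv_two_apply, stepE.fderiv]
  simp [hBdef, ContinuousLinearMap.sub_apply, ContinuousLinearMap.sum_apply,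
    ContinuousLinearMap.smulRight_apply, ContinuousLinearMap.smul_apply,
    ContinuousLinearMap.proj_apply, smul_eq_mul, hS_apply]

/-- The KL case: for `H(μ) = Σ μ(θ) log μ(θ)`, the Bregman divergence to degenerate
beliefs is `D(e_θ ∣ μ) = -log μ(θ)`; it satisfies (i) `min_θ D(e_θ ∣ μ) ≤ log n`,
(ii) a state with sufficiently small probability (`μ(θ) ≤ (1/n)·min_{θ'≠θ} μ(θ')`,
with `μ(θ)` below the maximum) is not the closest state, and
(iii) for the degree-1 homogeneous extension `H(x) = Σ x(θ) log(x(θ)/Σx)`, the mixed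
Hessian condition `(e_θ - μ)ᵀ Hess H(μ) (e_{θ'} - μ) ≤ 0` holds for `θ ≠ θ'`. -/
theorem kl_divergence_assumption_one {n : ℕ} (hn : 2 ≤ n)
    (μ : Fin n → ℝ) (hpos : ∀ i, 0 < μ i) (hsum : ∑ i, μ i = 1) :
    let e : Fin n → Fin n → ℝ := fun θ i => if i = θ then 1 else 0
    let HS : (Fin n → ℝ) → ℝ := fun x => ∑ i, x i * log (x i)
    -- Bregman divergence of HS with gradient ∇HS(μ)(i) = log μ(i) + 1
    let D : (Fin n → ℝ) → (Fin n → ℝ) → ℝ :=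
      fun ν μ' => HS ν - HS μ' - ∑ i, (log (μ' i) + 1) * (ν i - μ' i)
    -- degree-1 homogeneous extension of HS
    let Hext : (Fin n → ℝ) → ℝ := fun x => ∑ i, x i * log (x i / ∑ j, x j)
    (∀ θ, D (e θ) μ = -log (μ θ)) ∧
    (∃ θ, D (e θ) μ ≤ log n) ∧
    (∀ θ, (∀ θ', θ' ≠ θ → μ θ ≤ (1 / n) * μ θ') → (∃ θ'', μ θ < μ θ'') →
      ∃ θ', θ' ≠ θ ∧ D (e θ') μ < D (e θ) μ) ∧
    (∀ θ θ', θ ≠ θ' →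
      iteratedFDeriv ℝ 2 Hext μ ![fun i => e θ i - μ i, fun i => e θ' i - μ i] ≤ 0) := by
  intro e HS D Hext
  have hn0 : 0 < n := lt_of_lt_of_le (by norm_num) hn
  haveI : Nonempty (Fin n) := Fin.pos_iff_nonempty.mp hn0
  -- Part 1
  have part1 : ∀ θ, D (e θ) μ = -log (μ θ) := by
    intro θ
    have h1 : HS (e θ) = 0 := by
      apply Finset.sum_eq_zero
      intro i _
      by_cases h : i = θ <;> simp [e, h]
    have h2 : ∑ i, (log (μ i) + 1) * (e θ i - μ i)
        = (log (μ θ) + 1) - (HS μ + 1) := by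
      have key : ∀ i : Fin n, (log (μ i) + 1) * (e θ i - μ i)
          = (log (μ i) + 1) * e θ i - (μ i * log (μ i) + μ i) := by
        intro i; ring
      rw [Finset.sum_congr rfl (fun i _ => key i), Finset.sum_sub_distrib,
        Finset.sum_add_distrib, hsum]
      congr 1
      simp [e, mul_ite, mul_one, mul_zero, Finset.sum_ite_eq', Finset.mem_univ]
    simp only [D, h1, h2]
    ring
  refine ⟨part1, ?_, ?_, ?_⟩
  -- Part 2
  · obtain ⟨θ, -, hθ⟩ := Finset.exists_max_image Finset.univ μ Finset.univ_nonempty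
    refine ⟨θ, ?_⟩
    rw [part1 θ]
    have hcard : (1 : ℝ) ≤ n * μ θ := by
      calc (1 : ℝ) = ∑ i, μ i := hsum.symm
        _ ≤ ∑ _i : Fin n, μ θ := Finset.sum_le_sum (fun i _ => hθ i (Finset.mem_univ i))
        _ = n * μ θ := by simp [Finset.sum_const, Finset.card_univ, nsmul_eq_mul]
    have hinv : (μ θ)⁻¹ ≤ (n : ℝ) := by
      rw [inv_le_iff_one_le_mul₀ (hpos θ)]
      linarith
    calc -log (μ θ) = log (μ θ)⁻¹ := (Real.log_inv _).symm
      _ ≤ log n := Real.log_le_log (inv_pos.mpr (hpos θ)) hinv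
  -- Part 3
  · intro θ _ hex
    obtain ⟨θ'', hlt⟩ := hex
    refine ⟨θ'', fun h => by rw [h] at hlt; exact lt_irrefl _ hlt, ?_⟩
    rw [part1 θ, part1 θ'']
    exact neg_lt_neg (Real.log_lt_log (hpos θ) hlt)
  -- Part 4
  · intro θ θ' hne
    rw [show Hext = fun x : Fin n → ℝ => ∑ i, x i * log (x i / ∑ j, x j) from rfl]
    rw [kl_hess hn0 μ hpos hsum]
    have hzero : ∑ i, (fun i => e θ i - μ i) i = 0 := by
      simp only
      rw [Finset.sum_sub_distrib, hsum]
      simp [e, Finset.sum_ite_eq', Finset.mem_univ]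
    have hmain : ∑ i, (μ i)⁻¹ * (fun i => e θ i - μ i) i * (fun i => e θ' i - μ i) i
        = -1 := by
      have key : ∀ i : Fin n, (μ i)⁻¹ * (e θ i - μ i) * (e θ' i - μ i)
          = (μ i)⁻¹ * (e θ i * e θ' i) - e θ i - e θ' i + μ i := by
        intro i
        have h0 : μ i ≠ 0 := (hpos i).ne'
        field_simp
        ring
      simp only
      rw [Finset.sum_congr rfl (fun i _ => key i)]
      have hprod : ∀ i : Fin n, e θ i * e θ' i = 0 := by
        intro i
        by_cases h : i = θ
        · subst h; simp [e, hne]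
        · simp [e, h]
      have : ∀ i : Fin n, (μ i)⁻¹ * (e θ i * e θ' i) - e θ i - e θ' i + μ i
          = - e θ i - e θ' i + μ i := by
        intro i; rw [hprod i]; ring
      rw [Finset.sum_congr rfl (fun i _ => this i)]
      have he1 : ∑ i, e θ i = 1 := by simp [e, Finset.sum_ite_eq', Finset.mem_univ]
      have he2 : ∑ i, e θ' i = 1 := by simp [e, Finset.sum_ite_eq', Finset.mem_univ]
      simp only [Finset.sum_add_distrib, Finset.sum_sub_distrib, ← Finset.sum_neg_distrib]
      rw [Finset.sum_neg_distrib, he1, he2, hsum]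
      ring
    rw [hzero, hmain]
    norm_num
end
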